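/- Attitude Lyapunov decrease with cross-term cancellation: suppose δq, η : ℝ → ℝ³ satisfy δq' = −(1/2)|δq0|·K_{ω,p}·δq − (1/2)|δq0|·η0·K_{ω,i}·η − sign(δq0)·δq × (K_{ω,p}·δq + η0·K_{ω,i}·η) and η' = (1/2)·η0·|δq0|·K_{ω,i}·δq − (1/2)·|η0|·K_η·η + (terms of the form η × w for some w), where δq0, η0 : ℝ → ℝ are arbitrary measurable scalar functions and K_{ω,p}, K_{ω,i}, K_η are symmetric positive-definite matrices with K_{ω,p} ⪰ c₁·I and K_η ⪰ c₂·I (c₁, c₂ > 0). Then V = (1/2)(‖δq‖² + ‖η‖²) satisfies V' ≤ −(c₁/2)|δq0|·‖δq‖² − (c₂/2)|η0|·‖η‖² along solutions. -/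

import Mathlib

open Matrix

/-- Attitude Lyapunov decrease with cross-term cancellation: if
`δq' = −(1/2)|δq₀| K_{ω,p} δq − (1/2)|δq₀| η₀ K_{ω,i} η
      − sign(δq₀) δq × (K_{ω,p} δq + η₀ K_{ω,i} η)` and
`η' = (1/2) η₀ |δq₀| K_{ω,i} δq − (1/2)|η₀| K_η η + η × w`, with `δq₀, η₀`
arbitrary measurable scalar functions and `K_{ω,p}, K_{ω,i}, K_η` symmetric
positive-definite matrices with `K_{ω,p} ⪰ c₁ I`, `K_η ⪰ c₂ I` (`c₁, c₂ > 0`),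
then `V = (1/2)(‖δq‖² + ‖η‖²)` satisfies
`V' ≤ −(c₁/2)|δq₀|‖δq‖² − (c₂/2)|η₀|‖η‖²` along solutions. -/
theorem attitude_lyapunov_decrease
    (Kωp Kωi Kη : Matrix (Fin 3) (Fin 3) ℝ)
    (hKωp : Kωp.IsSymm ∧ Kωp.PosDef) (hKωi : Kωi.IsSymm ∧ Kωi.PosDef)
    (hKη : Kη.IsSymm ∧ Kη.PosDef)
    (c₁ c₂ : ℝ) (hc₁ : 0 < c₁) (hc₂ : 0 < c₂)
    (hKωp_lb : ∀ v : Fin 3 → ℝ, c₁ * (v ⬝ᵥ v) ≤ v ⬝ᵥ Kωp *ᵥ v)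
    (hKη_lb : ∀ v : Fin 3 → ℝ, c₂ * (v ⬝ᵥ v) ≤ v ⬝ᵥ Kη *ᵥ v)
    (δq₀ η₀ : ℝ → ℝ) (hδq₀ : Measurable δq₀) (hη₀ : Measurable η₀)
    (w : ℝ → Fin 3 → ℝ)
    (δq η : ℝ → Fin 3 → ℝ)
    (hδq : ∀ t, HasDerivAt δq
      (-(1 / 2 * |δq₀ t|) • (Kωp *ᵥ δq t) - (1 / 2 * |δq₀ t| * η₀ t) • (Kωi *ᵥ η t)
        - Real.sign (δq₀ t) •
            (crossProduct (δq t) (Kωp *ᵥ δq t + η₀ t • (Kωi *ᵥ η t)))) t)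
    (hη : ∀ t, HasDerivAt η
      ((1 / 2 * η₀ t * |δq₀ t|) • (Kωi *ᵥ δq t) - (1 / 2 * |η₀ t|) • (Kη *ᵥ η t)
        + crossProduct (η t) (w t)) t)
    (V : ℝ → ℝ)
    (hV : ∀ t, V t = (1 / 2) * (δq t ⬝ᵥ δq t + η t ⬝ᵥ η t)) :
    ∀ t, deriv V t ≤
      -(c₁ / 2) * |δq₀ t| * (δq t ⬝ᵥ δq t) - (c₂ / 2) * |η₀ t| * (η t ⬝ᵥ η t) := by
  intro t
  have hsym : ∀ a b : Fin 3 → ℝ, a ⬝ᵥ (Kωi *ᵥ b) = b ⬝ᵥ (Kωi *ᵥ a) := by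
    intro a b
    rw [Matrix.dotProduct_mulVec, ← Matrix.mulVec_transpose, hKωi.1, dotProduct_comm]
  -- component-wise derivatives
  have hdot : ∀ (f : ℝ → Fin 3 → ℝ) (d : Fin 3 → ℝ), HasDerivAt f d t →
      HasDerivAt (fun s => f s ⬝ᵥ f s) (2 * (f t ⬝ᵥ d)) t := by
    intro f d hf
    have hi : ∀ i, HasDerivAt (fun s => f s i) (d i) t := fun i =>
      (ContinuousLinearMap.proj i : (Fin 3 → ℝ) →L[ℝ] ℝ).hasFDerivAt.comp_hasDerivAt t hf
    have hsum : HasDerivAt (fun s => ∑ i, f s i * f s i)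
        (∑ i, (d i * f t i + f t i * d i)) t :=
      HasDerivAt.fun_sum fun i _ => (hi i).mul (hi i)
    have heq : (∑ i, (d i * f t i + f t i * d i)) = 2 * (f t ⬝ᵥ d) := by
      simp only [dotProduct, Fin.sum_univ_three]
      ring
    rw [heq] at hsum
    simpa [dotProduct] using hsum
  set D1 := -(1 / 2 * |δq₀ t|) • (Kωp *ᵥ δq t) - (1 / 2 * |δq₀ t| * η₀ t) • (Kωi *ᵥ η t)
        - Real.sign (δq₀ t) •
            (crossProduct (δq t) (Kωp *ᵥ δq t + η₀ t • (Kωi *ᵥ η t))) with hD1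
  set D2 := (1 / 2 * η₀ t * |δq₀ t|) • (Kωi *ᵥ δq t) - (1 / 2 * |η₀ t|) • (Kη *ᵥ η t)
        + crossProduct (η t) (w t) with hD2
  have hVfun : V = fun s => (1 / 2) * (δq s ⬝ᵥ δq s + η s ⬝ᵥ η s) := funext hV
  have hVd : HasDerivAt V ((1 / 2) * (2 * (δq t ⬝ᵥ D1) + 2 * (η t ⬝ᵥ D2))) t := by
    rw [hVfun]
    exact ((hdot δq D1 (hδq t)).add (hdot η D2 (hη t))).const_mul (1 / 2)
  rw [hVd.deriv]
  have e1 : δq t ⬝ᵥ D1 = -(1 / 2 * |δq₀ t|) * (δq t ⬝ᵥ (Kωp *ᵥ δq t))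
      - (1 / 2 * |δq₀ t| * η₀ t) * (δq t ⬝ᵥ (Kωi *ᵥ η t)) := by
    rw [hD1]
    simp only [dotProduct_sub, dotProduct_smul, dot_self_cross, smul_eq_mul,
      mul_zero, sub_zero]
  have e2 : η t ⬝ᵥ D2 = (1 / 2 * η₀ t * |δq₀ t|) * (η t ⬝ᵥ (Kωi *ᵥ δq t))
      - (1 / 2 * |η₀ t|) * (η t ⬝ᵥ (Kη *ᵥ η t)) := by
    rw [hD2]
    simp only [dotProduct_add, dotProduct_sub, dotProduct_smul,
      dot_self_cross, smul_eq_mul, mul_zero, add_zero]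
  have h1 := hKωp_lb (δq t)
  have h2 := hKη_lb (η t)
  have a1 : (0:ℝ) ≤ |δq₀ t| := abs_nonneg _
  have a2 : (0:ℝ) ≤ |η₀ t| := abs_nonneg _
  rw [e1, e2, hsym (δq t) (η t)]
  nlinarith [mul_le_mul_of_nonneg_left h1 a1, mul_le_mul_of_nonneg_left h2 a2]
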